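/- Let H be a self-adjoint operator on a Hilbert space ℋ and let 𝔎 be a closed two-sided ideal of a C*-subalgebra ℭ of bounded operators on ℋ such that η(H) ∈ ℭ for all η ∈ C_0(ℝ). Define σ_𝔎(H) := { λ ∈ ℝ : for all η ∈ C_0(ℝ), η(λ) ≠ 0 implies η(H) ∉ 𝔎 }. If η ∈ C_0(ℝ) vanishes on σ_𝔎(H), then η(H) ∈ 𝔎. -/

import Mathlib

open scoped ZeroAtInfty

private lemma zai_sum_apply {ι : Type*} (T : Finset ι) (f : ι → C₀(ℝ, ℂ)) (x : ℝ) :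
    (∑ i ∈ T, f i) x = ∑ i ∈ T, f i x := by
  classical
  induction T using Finset.induction with
  | empty => simp
  | insert a s h ih => simp [Finset.sum_insert h, ih]

private lemma key_approx (A : Type*) [NonUnitalNormedRing A] [StarRing A] [CStarRing A]
    [CompleteSpace A] [NormedSpace ℂ A] [IsScalarTower ℂ A A]
    [SMulCommClass ℂ A A] [StarModule ℂ A]
    (Φ : C₀(ℝ, ℂ) →⋆ₙₐ[ℂ] A)
    (K : TwoSidedIdeal A)
    (η : C₀(ℝ, ℂ))
    (hη : ∀ lam : ℝ,
      (∀ ζ : C₀(ℝ, ℂ), ζ lam ≠ 0 → Φ ζ ∉ K) → η lam = 0)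
    (ε : ℝ) (hε : 0 < ε) : ∃ k ∈ K, ‖Φ η - k‖ ≤ ε := by
  classical
  letI : NonUnitalCStarAlgebra A := { }
  have hcontr : ∀ f : C₀(ℝ, ℂ), ‖Φ f‖ ≤ ‖f‖ := fun f => NonUnitalStarAlgHom.norm_apply_le Φ f
  -- the truncation factor
  set t : ℝ → ℝ := fun x => max 0 (‖η x‖ - ε) / max ‖η x‖ ε with ht_def
  have hden_pos : ∀ x, 0 < max ‖η x‖ ε := fun x => lt_of_lt_of_le hε (le_max_right _ _)
  have ht0 : ∀ x, 0 ≤ t x := fun x => div_nonneg (le_max_left _ _) (hden_pos x).le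
  have ht1 : ∀ x, t x ≤ 1 := by
    intro x
    rw [div_le_one (hden_pos x)]
    rcases le_total (‖η x‖ - ε) 0 with h | h
    · rw [max_eq_left h]; exact (hden_pos x).le
    · rw [max_eq_right h]
      exact le_trans (by linarith) (le_max_left _ _)
  -- the truncated function ηε
  set ηε : C₀(ℝ, ℂ) := ZeroAtInftyContinuousMap.mk
    (ContinuousMap.mk (fun x => η x * (t x : ℂ))
      (by
        apply (map_continuous η).mul
        apply Complex.continuous_ofReal.comp
        exact (continuous_const.max ((map_continuous η).norm.sub continuous_const)).div
          ((map_continuous η).norm.max continuous_const) (fun x => (hden_pos x).ne')))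
    (by
      have hb : ∀ x, ‖η x * (t x : ℂ)‖ ≤ ‖η x‖ := by
        intro x
        rw [norm_mul, Complex.norm_real, Real.norm_of_nonneg (ht0 x)]
        calc ‖η x‖ * t x ≤ ‖η x‖ * 1 := by
              exact mul_le_mul_of_nonneg_left (ht1 x) (norm_nonneg _)
          _ = ‖η x‖ := mul_one _
      rw [tendsto_zero_iff_norm_tendsto_zero]
      exact squeeze_zero (fun x => norm_nonneg _) hb
        (tendsto_zero_iff_norm_tendsto_zero.mp (zero_at_infty η)))
    with hηε_def
  have hηε_apply : ∀ x, ηε x = η x * (t x : ℂ) := fun x => rfl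
  have hηε_zero : ∀ x, ‖η x‖ < ε → ηε x = 0 := by
    intro x hx
    have h0 : t x = 0 := by
      rw [ht_def]
      simp only []
      rw [max_eq_left (by linarith : ‖η x‖ - ε ≤ 0), zero_div]
    rw [hηε_apply, h0]
    simp
  have hdiff : ∀ x, ‖η x - ηε x‖ ≤ ε := by
    intro x
    rw [hηε_apply]
    have : η x - η x * (t x : ℂ) = η x * ((1 - t x : ℝ) : ℂ) := by push_cast; ring
    rw [this, norm_mul, Complex.norm_real, Real.norm_of_nonneg (by linarith [ht1 x])]
    rcases le_total ‖η x‖ ε with h | h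
    · calc ‖η x‖ * (1 - t x) ≤ ‖η x‖ * 1 := by
            exact mul_le_mul_of_nonneg_left (by linarith [ht0 x]) (norm_nonneg _)
        _ ≤ ε := by linarith
    · have hpos : 0 < ‖η x‖ := lt_of_lt_of_le hε h
      have : t x = (‖η x‖ - ε) / ‖η x‖ := by
        rw [ht_def]; simp only []
        rw [max_eq_right (by linarith : (0:ℝ) ≤ ‖η x‖ - ε), max_eq_left h]
      rw [this]
      have harith : ‖η x‖ * (1 - (‖η x‖ - ε) / ‖η x‖) = ε := by
        rw [mul_sub, mul_one, mul_div_cancel₀ _ hpos.ne']; ring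
      exact le_of_eq harith
  have hnd : ‖η - ηε‖ ≤ ε := by
    rw [← ZeroAtInftyContinuousMap.norm_toBCF_eq_norm]
    refine (BoundedContinuousFunction.norm_le hε.le).mpr fun x => ?_
    simpa using hdiff x
  -- the compact set C
  set C : Set ℝ := {x | ε ≤ ‖η x‖} with hC_def
  have hCcl : IsClosed C := isClosed_le continuous_const (map_continuous η).norm
  have hCcpt : IsCompact C := by
    have h1 : ∀ᶠ x in Filter.cocompact ℝ, dist (η x) 0 < ε :=
      Metric.tendsto_nhds.mp (zero_at_infty η) ε hε
    obtain ⟨s, hs, hsub⟩ := Filter.mem_cocompact.mp h1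
    refine hs.of_isClosed_subset hCcl fun x hx => ?_
    by_contra hxs
    have := hsub hxs
    simp only [Set.mem_setOf_eq, dist_zero_right] at this
    exact absurd (hx : ε ≤ ‖η x‖) (not_le.mpr this)
  -- choose witnesses
  have hex : ∀ lam ∈ C, ∃ ζ : C₀(ℝ, ℂ), ζ lam ≠ 0 ∧ Φ ζ ∈ K := by
    intro lam hlam
    by_contra h
    push_neg at h
    have := hη lam fun ζ hζ => h ζ hζ
    have : ‖η lam‖ = 0 := by rw [this, norm_zero]
    have : (0:ℝ) < 0 := by
      calc (0:ℝ) < ε := hε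
        _ ≤ ‖η lam‖ := hlam
        _ = 0 := this
    exact lt_irrefl 0 this
  choose! ζ hζ1 hζ2 using hex
  have hUopen : ∀ lam ∈ C, IsOpen {x | ζ lam x ≠ 0} := fun lam _ =>
    IsOpen.preimage (map_continuous (ζ lam)) isOpen_compl_singleton
  have hcov : C ⊆ ⋃ lam ∈ C, {x | ζ lam x ≠ 0} := fun x hx =>
    Set.mem_biUnion hx (hζ1 x hx)
  obtain ⟨b, hbC, hbfin, hbcov⟩ := hCcpt.elim_finite_subcover_image hUopen hcov
  set T : Finset ℝ := hbfin.toFinset with hT_def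
  set ψ : C₀(ℝ, ℂ) := ∑ lam ∈ T, star (ζ lam) * ζ lam with hψ_def
  have hψK : Φ ψ ∈ K := by
    rw [hψ_def, map_sum]
    refine Finset.sum_induction _ (· ∈ K) (fun a b ha hb => K.add_mem ha hb) K.zero_mem
      fun lam hlam => ?_
    rw [map_mul]
    exact K.mul_mem_left _ _ (hζ2 lam (hbC (hbfin.mem_toFinset.mp hlam)))
  set ψr : ℝ → ℝ := fun x => ∑ lam ∈ T, Complex.normSq (ζ lam x) with hψr_def
  have hψx : ∀ x, ψ x = (ψr x : ℂ) := by
    intro x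
    rw [hψ_def, zai_sum_apply, hψr_def]
    push_cast
    refine Finset.sum_congr rfl fun lam _ => ?_
    simp [Complex.normSq_eq_conj_mul_self]
  have hψr_nonneg : ∀ x, 0 ≤ ψr x := fun x =>
    Finset.sum_nonneg fun lam _ => Complex.normSq_nonneg _
  have hψr_cont : Continuous ψr := by
    apply continuous_finset_sum
    exact fun lam _ => Complex.continuous_normSq.comp (map_continuous (ζ lam))
  have hψr_pos : ∀ x ∈ C, 0 < ψr x := by
    intro x hx
    obtain ⟨lam, hlamb, hlamx⟩ := Set.mem_iUnion₂.mp (hbcov hx)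
    refine Finset.sum_pos' (fun i _ => Complex.normSq_nonneg _) ⟨lam, hbfin.mem_toFinset.mpr hlamb, ?_⟩
    exact Complex.normSq_pos.mpr hlamx
  by_cases hC : C.Nonempty
  · -- main case
    obtain ⟨x₀, hx₀C, hx₀min⟩ := hCcpt.exists_isMinOn hC hψr_cont.continuousOn
    set δ : ℝ := ψr x₀ with hδ_def
    have hδpos : 0 < δ := hψr_pos x₀ hx₀C
    set g : C₀(ℝ, ℂ) := ZeroAtInftyContinuousMap.mk
      (ContinuousMap.mk (fun x => ηε x * (((max (ψr x) δ)⁻¹ : ℝ) : ℂ))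
        (by
          apply (map_continuous ηε).mul
          apply Complex.continuous_ofReal.comp
          exact (hψr_cont.max continuous_const).inv₀
            fun x => (lt_of_lt_of_le hδpos (le_max_right _ _)).ne'))
      (by
        have hb : ∀ x, ‖ηε x * (((max (ψr x) δ)⁻¹ : ℝ) : ℂ)‖ ≤ ‖ηε x‖ * δ⁻¹ := by
          intro x
          rw [norm_mul, Complex.norm_real,
            Real.norm_of_nonneg (inv_nonneg.mpr (le_trans hδpos.le (le_max_right _ _)))]
          exact mul_le_mul_of_nonneg_left
            (inv_anti₀ hδpos (le_max_right _ _)) (norm_nonneg _)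
        rw [tendsto_zero_iff_norm_tendsto_zero]
        refine squeeze_zero (fun x => norm_nonneg _) hb ?_
        have := (tendsto_zero_iff_norm_tendsto_zero.mp
          (zero_at_infty ηε)).mul_const δ⁻¹
        simpa using this)
      with hg_def
    have hgψ : g * ψ = ηε := by
      ext x
      rw [ZeroAtInftyContinuousMap.coe_mul]
      show g x * ψ x = ηε x
      have hgx : g x = ηε x * (((max (ψr x) δ)⁻¹ : ℝ) : ℂ) := rfl
      rw [hgx, hψx]
      by_cases hx : x ∈ C
      · have hmax : max (ψr x) δ = ψr x := max_eq_left (hx₀min hx)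
        rw [hmax]
        have hne : (ψr x : ℂ) ≠ 0 := by
          exact_mod_cast (hψr_pos x hx).ne'
        push_cast
        field_simp
      · have : ηε x = 0 := hηε_zero x (lt_of_not_ge hx)
        rw [this, zero_mul, zero_mul]
    refine ⟨Φ ηε, ?_, ?_⟩
    · rw [← hgψ, map_mul]
      exact K.mul_mem_left _ _ hψK
    · calc ‖Φ η - Φ ηε‖ = ‖Φ (η - ηε)‖ := by rw [map_sub]
        _ ≤ ‖η - ηε‖ := hcontr _
        _ ≤ ε := hnd
  · -- C empty : η is uniformly small
    refine ⟨0, K.zero_mem, ?_⟩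
    rw [sub_zero]
    refine le_trans (hcontr η) ?_
    rw [← ZeroAtInftyContinuousMap.norm_toBCF_eq_norm]
    refine (BoundedContinuousFunction.norm_le hε.le).mpr fun x => ?_
    have : x ∉ C := fun hx => hC ⟨x, hx⟩
    simp only [hC_def, Set.mem_setOf_eq, not_le] at this
    simpa using this.le

theorem stmt18 (A : Type*) [NonUnitalNormedRing A] [StarRing A] [CStarRing A]
    [CompleteSpace A] [NormedSpace ℂ A] [IsScalarTower ℂ A A]
    [SMulCommClass ℂ A A] [StarModule ℂ A]
    (Φ : ZeroAtInftyContinuousMap ℝ ℂ →⋆ₙₐ[ℂ] A)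
    (K : TwoSidedIdeal A) (hK : IsClosed (K : Set A))
    (η : ZeroAtInftyContinuousMap ℝ ℂ)
    (hη : ∀ lam : ℝ,
      (∀ ζ : ZeroAtInftyContinuousMap ℝ ℂ, ζ lam ≠ 0 → Φ ζ ∉ K) → η lam = 0) :
    Φ η ∈ K := by
  have hcl : Φ η ∈ closure (K : Set A) := by
    rw [Metric.mem_closure_iff]
    intro ε hε
    obtain ⟨k, hk, hle⟩ := key_approx A Φ K η hη (ε / 2) (by linarith)
    exact ⟨k, hk, by rw [dist_eq_norm]; linarith⟩
  rwa [hK.closure_eq] at hcl
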